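/- For every integer n ≥ 2, the number of coconsistent subsets J of the 2-element subsets of [n] with contraction J/n = ∅ equals 2^{n−2}, and the number of coconsistent subsets J of the 2-element subsets of [n] with contraction J/n equal to the set of all singletons {{1},…,{n−1}} also equals 2^{n−2}. -/

import Mathlib

open Finset

/-- The `k`-element subsets of `[n] = {1, …, n}`. -/
def ksubsets (n k : ℕ) : Finset (Finset ℕ) := (Finset.Icc 1 n).powersetCard k

/-- The packet of `X`: all subsets of `X` with one element removed. -/
def packet (X : Finset ℕ) : Finset (Finset ℕ) := X.image (fun x => X.erase x)

/-- The copacket of `X` with respect to `[n]`: all sets `X ∪ {i}` for `i ∈ [n] \ X`. -/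
def copacket (n : ℕ) (X : Finset ℕ) : Finset (Finset ℕ) :=
  ((Finset.Icc 1 n) \ X).image (fun i => insert i X)

/-- The lexicographic order on finite sets of naturals viewed as increasing lists:
`X < Y` iff there is `m ∈ X \ Y` below which `X` and `Y` agree. -/
def lexLt (X Y : Finset ℕ) : Prop :=
  ∃ m ∈ X, m ∉ Y ∧ ∀ a < m, (a ∈ X ↔ a ∈ Y)

/-- `r` is a strict linear order on the collection `D`. -/
def IsStrictOrdOn (D : Finset (Finset ℕ)) (r : Finset ℕ → Finset ℕ → Prop) : Prop :=
  (∀ X ∈ D, ¬ r X X) ∧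
  (∀ X ∈ D, ∀ Y ∈ D, ∀ Z ∈ D, r X Y → r Y Z → r X Z) ∧
  (∀ X ∈ D, ∀ Y ∈ D, X ≠ Y → r X Y ∨ r Y X)

/-- The restriction of `r` to `P` is the lex order. -/
def RestrLex (r : Finset ℕ → Finset ℕ → Prop) (P : Finset (Finset ℕ)) : Prop :=
  ∀ A ∈ P, ∀ B ∈ P, (r A B ↔ lexLt A B)

/-- The restriction of `r` to `P` is the antilex order. -/
def RestrAntilex (r : Finset ℕ → Finset ℕ → Prop) (P : Finset (Finset ℕ)) : Prop :=
  ∀ A ∈ P, ∀ B ∈ P, (r A B ↔ lexLt B A)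

/-- `r` is an admissible order on the `k`-element subsets of `[n]`. -/
def Admissible (n k : ℕ) (r : Finset ℕ → Finset ℕ → Prop) : Prop :=
  IsStrictOrdOn (ksubsets n k) r ∧
  ∀ X ∈ ksubsets n (k+1), RestrLex r (packet X) ∨ RestrAntilex r (packet X)

/-- `r` is a coadmissible order on the `k`-element subsets of `[n]`. -/
def Coadmissible (n k : ℕ) (r : Finset ℕ → Finset ℕ → Prop) : Prop :=
  IsStrictOrdOn (ksubsets n k) r ∧
  ∀ X ∈ ksubsets n (k-1), RestrLex r (copacket n X) ∨ RestrAntilex r (copacket n X)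

open scoped Classical in
/-- The reversal set of an order on the `k`-element subsets of `[n]`:
the `(k+1)`-element subsets whose packet is restricted to the antilex order. -/
noncomputable def Rev (n k : ℕ) (r : Finset ℕ → Finset ℕ → Prop) : Finset (Finset ℕ) :=
  (ksubsets n (k+1)).filter (fun X => RestrAntilex r (packet X))

open scoped Classical in
/-- The coreversal set of an order on the `k`-element subsets of `[n]`:
the `(k-1)`-element subsets whose copacket is restricted to the antilex order. -/
noncomputable def Corev (n k : ℕ) (r : Finset ℕ → Finset ℕ → Prop) : Finset (Finset ℕ) :=
  (ksubsets n (k-1)).filter (fun X => RestrAntilex r (copacket n X))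

/-- `P ∩ I` is a prefix (lower set) of `P` in lex order. -/
def IsLexPrefix (P I : Finset (Finset ℕ)) : Prop :=
  ∀ A ∈ P, ∀ B ∈ P, B ∈ I → lexLt A B → A ∈ I

/-- `P ∩ I` is a suffix (upper set) of `P` in lex order. -/
def IsLexSuffix (P I : Finset (Finset ℕ)) : Prop :=
  ∀ A ∈ P, ∀ B ∈ P, A ∈ I → lexLt A B → B ∈ I

/-- `I` is a consistent subset of the `k`-element subsets of `[n]`. -/
def Consistent (n k : ℕ) (I : Finset (Finset ℕ)) : Prop :=
  I ⊆ ksubsets n k ∧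
  ∀ X ∈ ksubsets n (k+1), IsLexPrefix (packet X) I ∨ IsLexSuffix (packet X) I

/-- `I` is a coconsistent subset of the `k`-element subsets of `[n]`. -/
def CoConsistent (n k : ℕ) (I : Finset (Finset ℕ)) : Prop :=
  I ⊆ ksubsets n k ∧
  ∀ X ∈ ksubsets n (k-1), IsLexPrefix (copacket n X) I ∨ IsLexSuffix (copacket n X) I

/-- Deletion `I \ n` of a set of subsets. -/
def del (I : Finset (Finset ℕ)) (n : ℕ) : Finset (Finset ℕ) := I.filter (fun X => n ∉ X)

/-- Contraction `I / n` of a set of subsets. -/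
def contr (I : Finset (Finset ℕ)) (n : ℕ) : Finset (Finset ℕ) :=
  (I.filter (fun X => n ∈ X)).image (fun X => X.erase n)

/-- Contraction `ρ / n` of a linear order: `X < Y` iff `X ∪ {n} < Y ∪ {n}` in `ρ`. -/
def contrOrd (r : Finset ℕ → Finset ℕ → Prop) (n : ℕ) : Finset ℕ → Finset ℕ → Prop :=
  fun X Y => r (insert n X) (insert n Y)

/-- The Gale order: componentwise comparison of the increasing enumerations. -/
def galeLe (A B : Finset ℕ) : Prop :=
  List.Forall₂ (· ≤ ·) (A.sort (· ≤ ·)) (B.sort (· ≤ ·))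

/-- The consistent poset relation `≺_I` on the `(k-1)`-element subsets of `[n]`:
within the packet of `X ∈ I` the antilex order, and within the packet of
`X ∉ I` the lex order, transitively closed. -/
def cpRel (n k : ℕ) (I : Finset (Finset ℕ)) : Finset ℕ → Finset ℕ → Prop :=
  Relation.TransGen (fun A B =>
    ∃ X ∈ ksubsets n k, A ∈ packet X ∧ B ∈ packet X ∧
      ((X ∈ I ∧ lexLt B A) ∨ (X ∉ I ∧ lexLt A B)))

/-- A single-step-inclusion cover within the collection `C`. -/
def SSIStep (C : Finset (Finset ℕ) → Prop) (A B : Finset (Finset ℕ)) : Prop :=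
  C A ∧ C B ∧ ∃ Y, Y ∉ A ∧ B = insert Y A

/-- The single step inclusion order on the collection `C`. -/
def SSILe (C : Finset (Finset ℕ) → Prop) : Finset (Finset ℕ) → Finset (Finset ℕ) → Prop :=
  Relation.ReflTransGen (SSIStep C)

/-! ### Auxiliary machinery for counting coconsistent subsets -/

section CoconsistentCount

open Finset

/-- Canonical increasing representation of a 2-element finset. -/
lemma exists_pair_rep {X : Finset ℕ} (h : X.card = 2) : ∃ i j, i < j ∧ X = {i, j} := by
  rw [Finset.card_eq_two] at h
  obtain ⟨i, j, hne, rfl⟩ := h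
  rcases hne.lt_or_gt with h | h
  · exact ⟨i, j, h, rfl⟩
  · exact ⟨j, i, h, Finset.pair_comm i j⟩

lemma pair_eq_pair {i j i' j' : ℕ} (h1 : i < j) (h2 : i' < j')
    (h : ({i, j} : Finset ℕ) = {i', j'}) : i = i' ∧ j = j' := by
  have hi : i = i' ∨ i = j' := by
    have : i ∈ ({i', j'} : Finset ℕ) := h ▸ (by simp)
    simpa using this
  have hj : j = i' ∨ j = j' := by
    have : j ∈ ({i', j'} : Finset ℕ) := h.symm ▸ (by simp)
    simpa using this
  have hi' : i' = i ∨ i' = j := by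
    have : i' ∈ ({i, j} : Finset ℕ) := h.symm ▸ (by simp)
    simpa using this
  omega

lemma lexLt_pair {x i j : ℕ} (hi : i ≠ x) (hj : j ≠ x) :
    lexLt (insert i {x}) (insert j {x}) ↔ i < j := by
  constructor
  · rintro ⟨m, hmA, hmB, hag⟩
    simp only [Finset.mem_insert, Finset.mem_singleton, not_or] at hmA hmB
    obtain ⟨hmj, hmx⟩ := hmB
    have hmi : m = i := by
      rcases hmA with h | h
      · exact h
      · exact absurd h hmx
    rcases lt_trichotomy m j with h | h | h
    · omega
    · exact absurd h hmj
    · have hjA := (hag j h).mpr (by simp)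
      simp only [Finset.mem_insert, Finset.mem_singleton] at hjA
      omega
  · intro h
    refine ⟨i, by simp, ?_, ?_⟩
    · simp only [Finset.mem_insert, Finset.mem_singleton, not_or]
      exact ⟨by omega, hi⟩
    · intro a ha
      simp only [Finset.mem_insert, Finset.mem_singleton]
      omega

lemma pair_minmax (a b : ℕ) (h : a ≠ b) : ({min a b, max a b} : Finset ℕ) = {a, b} := by
  rcases le_total a b with h' | h'
  · rw [min_eq_left h', max_eq_right h']
  · rw [min_eq_right h', max_eq_left h', Finset.pair_comm]

/-- Down-closedness of a set of pairs (of numbers `≥ a`) under the Gale order. -/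
def DownCl (a : ℕ) (J : Finset (Finset ℕ)) : Prop :=
  ∀ i j i' j' : ℕ, i < j → ({i, j} : Finset ℕ) ∈ J →
    a ≤ i' → i' ≤ i → i' < j' → j' ≤ j → ({i', j'} : Finset ℕ) ∈ J

open scoped Classical in
/-- The collection of shifted graphs on the vertex set `[a, b]`. -/
noncomputable def SGF (a b : ℕ) : Finset (Finset (Finset ℕ)) :=
  Finset.filter (DownCl a) ((Finset.Icc a b).powersetCard 2).powerset

lemma mem_SGF {a b : ℕ} {J : Finset (Finset ℕ)} :
    J ∈ SGF a b ↔ J ⊆ (Finset.Icc a b).powersetCard 2 ∧ DownCl a J := by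
  classical
  simp [SGF, and_comm]

lemma pair_mem_rep {a b : ℕ} {J : Finset (Finset ℕ)} (hJ : J ∈ SGF a b)
    {X : Finset ℕ} (hX : X ∈ J) : ∃ i j, i < j ∧ a ≤ i ∧ j ≤ b ∧ X = {i, j} := by
  have h := Finset.mem_powersetCard.mp ((mem_SGF.mp hJ).1 hX)
  obtain ⟨i, j, hij, rfl⟩ := exists_pair_rep h.2
  have hi := Finset.mem_Icc.mp (h.1 (by simp : i ∈ ({i,j} : Finset ℕ)))
  have hj := Finset.mem_Icc.mp (h.1 (by simp : j ∈ ({i,j} : Finset ℕ)))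
  exact ⟨i, j, hij, hi.1, hj.2, rfl⟩

lemma SGF_filter_not (a d : ℕ) :
    (SGF a (a + d + 1)).filter (fun J => ({a, a + d + 1} : Finset ℕ) ∉ J) = SGF a (a + d) := by
  ext J
  rw [Finset.mem_filter]
  constructor
  · rintro ⟨hJ, htop⟩
    have hd := (mem_SGF.mp hJ).2
    rw [mem_SGF]
    refine ⟨?_, hd⟩
    intro X hX
    obtain ⟨i, j, hij, hai, hjb, rfl⟩ := pair_mem_rep hJ hX
    rw [Finset.mem_powersetCard]
    have hjlt : j ≤ a + d := by
      by_contra hc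
      have hj : j = a + d + 1 := by omega
      subst hj
      exact htop (hd i (a + d + 1) a (a + d + 1) hij hX le_rfl hai (by omega) le_rfl)
    constructor
    · intro x hx
      simp only [Finset.mem_insert, Finset.mem_singleton] at hx
      rw [Finset.mem_Icc]
      omega
    · rw [Finset.card_insert_of_notMem (by simp; omega), Finset.card_singleton]
  · intro hJ
    have hb := (mem_SGF.mp hJ).1
    refine ⟨mem_SGF.mpr ⟨?_, (mem_SGF.mp hJ).2⟩, ?_⟩
    · exact hb.trans (Finset.powersetCard_mono (Finset.Icc_subset_Icc_right (by omega)))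
    · intro hc
      have h := Finset.mem_powersetCard.mp (hb hc)
      have := Finset.mem_Icc.mp (h.1 (by simp : a + d + 1 ∈ ({a, a+d+1} : Finset ℕ)))
      omega

lemma SGF_filter_top_card (a d : ℕ) :
    ((SGF a (a + d + 1)).filter (fun J => ({a, a + d + 1} : Finset ℕ) ∈ J)).card
      = (SGF (a + 1) (a + d + 1)).card := by
  classical
  set b := a + d + 1 with hbdef
  have hab : a < b := by omega
  set star : Finset (Finset ℕ) := (Finset.Icc (a+1) b).image (fun c => ({a, c} : Finset ℕ))
    with hstar
  have mem_star : ∀ X, X ∈ star ↔ ∃ c, a + 1 ≤ c ∧ c ≤ b ∧ X = {a, c} := by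
    intro X
    simp only [hstar, Finset.mem_image, Finset.mem_Icc]
    constructor
    · rintro ⟨c, ⟨h1, h2⟩, rfl⟩; exact ⟨c, h1, h2, rfl⟩
    · rintro ⟨c, h1, h2, rfl⟩; exact ⟨c, ⟨h1, h2⟩, rfl⟩
  apply Finset.card_nbij' (fun J => J.filter (fun X => a ∉ X)) (fun J' => J' ∪ star)
  · intro J hJ
    rw [Finset.mem_coe, Finset.mem_filter] at hJ
    obtain ⟨hJ, htop⟩ := hJ
    rw [Finset.mem_coe, mem_SGF]
    constructor
    · intro X hX
      rw [Finset.mem_filter] at hX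
      obtain ⟨hX, haX⟩ := hX
      obtain ⟨i, j, hij, hai, hjb, rfl⟩ := pair_mem_rep hJ hX
      rw [Finset.mem_powersetCard]
      simp only [Finset.mem_insert, Finset.mem_singleton, not_or] at haX
      constructor
      · intro x hx
        simp only [Finset.mem_insert, Finset.mem_singleton] at hx
        rw [Finset.mem_Icc]
        omega
      · rw [Finset.card_insert_of_notMem (by simp; omega), Finset.card_singleton]
    · intro i j i' j' hij hmem hai' hi'i hi'j' hj'j
      rw [Finset.mem_filter] at hmem ⊢
      refine ⟨(mem_SGF.mp hJ).2 i j i' j' hij hmem.1 (by omega) hi'i hi'j' hj'j, ?_⟩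
      simp only [Finset.mem_insert, Finset.mem_singleton, not_or]
      omega
  · intro J' hJ'
    rw [Finset.mem_coe, Finset.mem_filter]
    have hbJ' : ∀ X ∈ J', ∃ i j, i < j ∧ a + 1 ≤ i ∧ j ≤ b ∧ X = {i, j} :=
      fun X hX => pair_mem_rep hJ' hX
    constructor
    · rw [mem_SGF]
      constructor
      · intro X hX
        rw [Finset.mem_union] at hX
        rcases hX with hX | hX
        · obtain ⟨i, j, hij, hai, hjb, rfl⟩ := hbJ' X hX
          rw [Finset.mem_powersetCard]
          constructor
          · intro x hx
            simp only [Finset.mem_insert, Finset.mem_singleton] at hx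
            rw [Finset.mem_Icc]; omega
          · rw [Finset.card_insert_of_notMem (by simp; omega), Finset.card_singleton]
        · obtain ⟨c, hc1, hc2, rfl⟩ := (mem_star X).mp hX
          rw [Finset.mem_powersetCard]
          constructor
          · intro x hx
            simp only [Finset.mem_insert, Finset.mem_singleton] at hx
            rw [Finset.mem_Icc]; omega
          · rw [Finset.card_insert_of_notMem (by simp; omega), Finset.card_singleton]
      · intro i j i' j' hij hmem hai' hi'i hi'j' hj'j
        rw [Finset.mem_union] at hmem ⊢
        rcases hmem with hmem | hmem
        · obtain ⟨p, q, hpq, hap, hqb, heq⟩ := hbJ' _ hmem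
          obtain ⟨rfl, rfl⟩ := pair_eq_pair hij hpq heq
          by_cases hi'a : a + 1 ≤ i'
          · exact Or.inl ((mem_SGF.mp hJ').2 i j i' j' hij hmem hi'a hi'i hi'j' hj'j)
          · have : i' = a := by omega
            subst this
            exact Or.inr ((mem_star _).mpr ⟨j', by omega, by omega, rfl⟩)
        · obtain ⟨c, hc1, hc2, heq⟩ := (mem_star _).mp hmem
          have hac : i = a ∧ j = c := pair_eq_pair hij (by omega) heq
          have hi'a : i' = a := by omega
          subst hi'a
          exact Or.inr ((mem_star _).mpr ⟨j', by omega, by omega, rfl⟩)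
    · exact Finset.mem_union_right _ ((mem_star _).mpr ⟨b, by omega, le_rfl, rfl⟩)
  · intro J hJ
    rw [Finset.mem_coe, Finset.mem_filter] at hJ
    obtain ⟨hJ, htop⟩ := hJ
    ext X
    rw [Finset.mem_union, Finset.mem_filter, mem_star]
    constructor
    · rintro (⟨hX, -⟩ | ⟨c, hc1, hc2, rfl⟩)
      · exact hX
      · exact (mem_SGF.mp hJ).2 a b a c hab htop le_rfl le_rfl (by omega) hc2
    · intro hX
      by_cases haX : a ∈ X
      · obtain ⟨i, j, hij, hai, hjb, rfl⟩ := pair_mem_rep hJ hX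
        have hia : i = a := by
          simp only [Finset.mem_insert, Finset.mem_singleton] at haX
          omega
        subst hia
        exact Or.inr ⟨j, by omega, hjb, rfl⟩
      · exact Or.inl ⟨hX, haX⟩
  · intro J' hJ'
    ext X
    rw [Finset.mem_filter, Finset.mem_union, mem_star]
    constructor
    · rintro ⟨hX | ⟨c, hc1, hc2, rfl⟩, haX⟩
      · exact hX
      · exact absurd (by simp : a ∈ ({a, c} : Finset ℕ)) haX
    · intro hX
      obtain ⟨i, j, hij, hai, hjb, hrep⟩ := pair_mem_rep hJ' hX
      refine ⟨Or.inl hX, ?_⟩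
      rw [hrep]
      simp only [Finset.mem_insert, Finset.mem_singleton, not_or]
      omega

lemma SGF_self (a : ℕ) : SGF a a = {∅} := by
  ext J
  rw [mem_SGF, Finset.mem_singleton]
  constructor
  · rintro ⟨hb, -⟩
    rw [Finset.eq_empty_iff_forall_notMem]
    intro X hX
    have h2 := Finset.mem_powersetCard.mp (hb hX)
    have := Finset.card_le_card h2.1
    simp [Finset.Icc_self] at this
    omega
  · rintro rfl
    exact ⟨by simp, fun i j i' j' _ h => absurd h (by simp)⟩

lemma card_SGF : ∀ (d a : ℕ), (SGF a (a + d)).card = 2 ^ d := by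
  intro d
  induction d with
  | zero => intro a; rw [Nat.add_zero, SGF_self]; simp
  | succ d ih =>
    intro a
    have hsplit : ((SGF a (a+d+1)).filter (fun J => ({a, a+d+1} : Finset ℕ) ∈ J)).card
        + ((SGF a (a+d+1)).filter (fun J => ({a, a+d+1} : Finset ℕ) ∉ J)).card
        = (SGF a (a+d+1)).card :=
      Finset.card_filter_add_card_filter_not _
    have h1 : ((SGF a (a+d+1)).filter (fun J => ({a, a+d+1} : Finset ℕ) ∉ J)).card = 2 ^ d := by
      rw [SGF_filter_not]
      exact ih a
    have h2 := SGF_filter_top_card a d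
    have h3 : (SGF (a+1) (a+d+1)).card = 2 ^ d := by
      have he : a + d + 1 = (a + 1) + d := by omega
      rw [he]; exact ih (a+1)
    have h4 : (SGF a (a + (d+1))).card = (SGF a (a + d + 1)).card := by norm_num [Nat.add_assoc]
    omega

end CoconsistentCount
section CoconsistentBridge

open Finset

lemma mem_ksubsets {n k : ℕ} {X : Finset ℕ} :
    X ∈ ksubsets n k ↔ X ⊆ Finset.Icc 1 n ∧ X.card = k := by
  simp [ksubsets, Finset.mem_powersetCard]

lemma mem_copacket {n x : ℕ} {A : Finset ℕ} :
    A ∈ copacket n {x} ↔ ∃ i, 1 ≤ i ∧ i ≤ n ∧ i ≠ x ∧ A = insert i {x} := by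
  simp only [copacket, Finset.mem_image, Finset.mem_sdiff, Finset.mem_Icc,
    Finset.mem_singleton]
  constructor
  · rintro ⟨i, ⟨⟨h1, h2⟩, h3⟩, rfl⟩
    exact ⟨i, h1, h2, h3, rfl⟩
  · rintro ⟨i, h1, h2, h3, rfl⟩
    exact ⟨i, ⟨⟨h1, h2⟩, h3⟩, rfl⟩

lemma contr_eq_empty_iff {n : ℕ} {J : Finset (Finset ℕ)} :
    contr J n = ∅ ↔ ∀ X ∈ J, n ∉ X := by
  rw [contr]
  constructor
  · intro h X hX hnX
    have : X.erase n ∈ (Finset.image (fun X => X.erase n)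
        (J.filter (fun X => n ∈ X))) :=
      Finset.mem_image.mpr ⟨X, Finset.mem_filter.mpr ⟨hX, hnX⟩, rfl⟩
    rw [h] at this
    exact absurd this (Finset.notMem_empty _)
  · intro h
    rw [Finset.image_eq_empty, Finset.filter_eq_empty_iff]
    exact h

/-- Key step: under coconsistency with empty contraction, neighborhoods are
down-closed. -/
lemma coco_step {n : ℕ} {J : Finset (Finset ℕ)} (hco : CoConsistent n 2 J)
    (hnm : ∀ X ∈ J, n ∉ X) {x i j : ℕ} (hx1 : 1 ≤ x) (hxn : x ≤ n)
    (hi1 : 1 ≤ i) (hin : i ≤ n) (hix : i ≠ x) (hjx : j ≠ x) (hij : i < j)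
    (hmem : ({j, x} : Finset ℕ) ∈ J) : ({i, x} : Finset ℕ) ∈ J := by
  have hxk : ({x} : Finset ℕ) ∈ ksubsets n (2-1) := by
    rw [show (2:ℕ)-1 = 1 from rfl, mem_ksubsets]
    refine ⟨?_, Finset.card_singleton x⟩
    intro y hy
    rw [Finset.mem_singleton] at hy
    subst hy
    rw [Finset.mem_Icc]
    exact ⟨hx1, hxn⟩
  have hJk := mem_ksubsets.mp (hco.1 hmem)
  have hj1n : 1 ≤ j ∧ j ≤ n := by
    have := hJk.1 (by simp : j ∈ ({j,x} : Finset ℕ))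
    rwa [Finset.mem_Icc] at this
  have hjn : j ≠ n := by
    intro h
    exact hnm _ hmem (by simp [← h])
  have hxn' : n ≠ x := by
    intro h
    exact hnm _ hmem (by simp [h])
  have hBcop : ({j, x} : Finset ℕ) ∈ copacket n {x} :=
    mem_copacket.mpr ⟨j, hj1n.1, hj1n.2, hjx, rfl⟩
  have hAcop : ({i, x} : Finset ℕ) ∈ copacket n {x} :=
    mem_copacket.mpr ⟨i, hi1, hin, hix, rfl⟩
  have hCcop : (insert n {x} : Finset ℕ) ∈ copacket n {x} :=
    mem_copacket.mpr ⟨n, by omega, le_rfl, hxn', rfl⟩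
  rcases hco.2 _ hxk with hpre | hsuf
  · exact hpre _ hAcop _ hBcop hmem ((lexLt_pair hix hjx).mpr hij)
  · exfalso
    have : (insert n {x} : Finset ℕ) ∈ J :=
      hsuf _ hBcop _ hCcop hmem ((lexLt_pair hjx hxn').mpr (by omega))
    exact hnm _ this (by simp)

lemma coco_iff {n : ℕ} (hn : 2 ≤ n) {J : Finset (Finset ℕ)} :
    (CoConsistent n 2 J ∧ contr J n = ∅) ↔ J ∈ SGF 1 (n-1) := by
  constructor
  · rintro ⟨hco, hctr⟩
    have hnm : ∀ X ∈ J, n ∉ X := contr_eq_empty_iff.mp hctr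
    rw [mem_SGF]
    constructor
    · intro X hX
      have h := mem_ksubsets.mp (hco.1 hX)
      rw [Finset.mem_powersetCard]
      refine ⟨?_, h.2⟩
      intro y hy
      have h1 := Finset.mem_Icc.mp (h.1 hy)
      have h2 : y ≠ n := fun he => hnm X hX (he ▸ hy)
      rw [Finset.mem_Icc]
      omega
    · intro i j i' j' hij hmem h1i' hi'i hi'j' hj'j
      have h := mem_ksubsets.mp (hco.1 hmem)
      have hi := Finset.mem_Icc.mp (h.1 (by simp : i ∈ ({i,j} : Finset ℕ)))
      have hj := Finset.mem_Icc.mp (h.1 (by simp : j ∈ ({i,j} : Finset ℕ)))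
      have hmem' : ({j, i} : Finset ℕ) ∈ J := by
        rw [Finset.pair_comm]; exact hmem
      by_cases hj'i : j' = i
      · subst hj'i
        exact coco_step hco hnm hi.1 hi.2 (by omega) (by omega) (by omega) (by omega)
          (by omega) hmem'
      · have step1 : ({j', i} : Finset ℕ) ∈ J := by
          by_cases hj'j : j' = j
          · subst hj'j; exact hmem'
          · exact coco_step hco hnm hi.1 hi.2 (by omega) (by omega) hj'i (by omega)
              (by omega) hmem'
        have step1' : ({i, j'} : Finset ℕ) ∈ J := by
          rw [Finset.pair_comm]; exact step1
        by_cases hi'i' : i' = i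
        · subst hi'i'; exact step1'
        · exact coco_step hco hnm (by omega) (by omega) h1i' (by omega) (by omega)
            (fun h => hj'i h.symm) (by omega) step1'
  · intro hJ
    have hrep : ∀ X ∈ J, ∃ i j, i < j ∧ 1 ≤ i ∧ j ≤ n - 1 ∧ X = {i, j} :=
      fun X hX => pair_mem_rep hJ hX
    have hsub : J ⊆ ksubsets n 2 := by
      intro X hX
      obtain ⟨i, j, hij, h1, h2, rfl⟩ := hrep X hX
      rw [mem_ksubsets]
      constructor
      · intro y hy
        simp only [Finset.mem_insert, Finset.mem_singleton] at hy
        rw [Finset.mem_Icc]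
        omega
      · rw [Finset.card_insert_of_notMem (by simp; omega), Finset.card_singleton]
    have hnm : ∀ X ∈ J, n ∉ X := by
      intro X hX hnX
      obtain ⟨i, j, hij, h1, h2, rfl⟩ := hrep X hX
      simp only [Finset.mem_insert, Finset.mem_singleton] at hnX
      omega
    refine ⟨⟨hsub, ?_⟩, contr_eq_empty_iff.mpr hnm⟩
    intro X hXk
    rw [show (2:ℕ)-1 = 1 from rfl, mem_ksubsets] at hXk
    obtain ⟨x, rfl⟩ := Finset.card_eq_one.mp hXk.2
    have hx := Finset.mem_Icc.mp (hXk.1 (Finset.mem_singleton_self x))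
    left
    intro A hA B hB hBJ hAB
    obtain ⟨i, hi1, hin, hix, rfl⟩ := mem_copacket.mp hA
    obtain ⟨j, hj1, hjn, hjx, rfl⟩ := mem_copacket.mp hB
    have hij : i < j := (lexLt_pair hix hjx).mp hAB
    obtain ⟨p, q, hpq, hp1, hqn, heq⟩ := pair_mem_rep hJ hBJ
    have hminmax : ({min j x, max j x} : Finset ℕ) = ({p, q} : Finset ℕ) := by
      rw [pair_minmax _ _ hjx]
      exact heq
    have h2 := pair_eq_pair (min_lt_max.mpr hjx) hpq hminmax
    have hd := (mem_SGF.mp hJ).2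
    have htar : ({min i x, max i x} : Finset ℕ) ∈ J := by
      refine hd p q (min i x) (max i x) hpq (heq ▸ hBJ) ?_ ?_ ?_ ?_
      · exact le_min hi1 hx.1
      · rw [← h2.1]
        exact min_le_min (le_of_lt hij) le_rfl
      · exact min_lt_max.mpr hix
      · rw [← h2.2]
        exact max_le_max (le_of_lt hij) le_rfl
    rw [show (insert i {x} : Finset ℕ) = {i, x} from rfl, ← pair_minmax i x hix]
    exact htar

end CoconsistentBridge
section CoconsistentComplement

open Finset

lemma copacket_subset {n x : ℕ} (hx1 : 1 ≤ x) (hxn : x ≤ n) :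
    copacket n {x} ⊆ ksubsets n 2 := by
  intro A hA
  obtain ⟨i, hi1, hin, hix, rfl⟩ := mem_copacket.mp hA
  rw [mem_ksubsets]
  constructor
  · intro y hy
    simp only [Finset.mem_insert, Finset.mem_singleton] at hy
    rw [Finset.mem_Icc]
    omega
  · rw [Finset.card_insert_of_notMem (by simpa using hix), Finset.card_singleton]

lemma coco_compl {n : ℕ} {J : Finset (Finset ℕ)} (h : CoConsistent n 2 J) :
    CoConsistent n 2 (ksubsets n 2 \ J) := by
  refine ⟨Finset.sdiff_subset, ?_⟩
  intro X hXk
  have hXk' := hXk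
  rw [show (2:ℕ)-1 = 1 from rfl, mem_ksubsets] at hXk'
  obtain ⟨x, rfl⟩ := Finset.card_eq_one.mp hXk'.2
  have hx := Finset.mem_Icc.mp (hXk'.1 (Finset.mem_singleton_self x))
  have hcop := copacket_subset (n := n) hx.1 hx.2
  rcases h.2 _ hXk with hpre | hsuf
  · right
    intro A hA B hB hAmem hAB
    rw [Finset.mem_sdiff] at hAmem ⊢
    exact ⟨hcop hB, fun hBJ => hAmem.2 (hpre A hA B hB hBJ hAB)⟩
  · left
    intro A hA B hB hBmem hAB
    rw [Finset.mem_sdiff] at hBmem ⊢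
    exact ⟨hcop hA, fun hAJ => hBmem.2 (hsuf A hA B hB hAJ hAB)⟩

lemma mem_ksubsets_n {n : ℕ} (hn : 2 ≤ n) {X : Finset ℕ} (hX : X ∈ ksubsets n 2)
    (hnX : n ∈ X) : ∃ y, 1 ≤ y ∧ y ≤ n - 1 ∧ X = insert y {n} := by
  rw [mem_ksubsets] at hX
  obtain ⟨i, j, hij, rfl⟩ := exists_pair_rep hX.2
  have hi := Finset.mem_Icc.mp (hX.1 (by simp : i ∈ ({i,j} : Finset ℕ)))
  have hj := Finset.mem_Icc.mp (hX.1 (by simp : j ∈ ({i,j} : Finset ℕ)))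
  simp only [Finset.mem_insert, Finset.mem_singleton] at hnX
  have hjn : j = n := by omega
  subst hjn
  exact ⟨i, hi.1, by omega, rfl⟩

lemma erase_insert_pair {y n : ℕ} (h : y ≠ n) :
    ((insert y {n} : Finset ℕ)).erase n = {y} := by
  ext z
  simp only [Finset.mem_erase, Finset.mem_insert, Finset.mem_singleton]
  constructor
  · rintro ⟨h1, h2 | h2⟩
    · exact h2
    · exact absurd h2 h1
  · rintro rfl
    exact ⟨h, Or.inl rfl⟩

lemma contr_compl_of_empty {n : ℕ} (hn : 2 ≤ n) {J : Finset (Finset ℕ)}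
    (hnm : ∀ X ∈ J, n ∉ X) :
    contr (ksubsets n 2 \ J) n = (Finset.Icc 1 (n - 1)).image (fun i => ({i} : Finset ℕ)) := by
  ext S
  rw [contr, Finset.mem_image]
  constructor
  · rintro ⟨X, hX, rfl⟩
    rw [Finset.mem_filter, Finset.mem_sdiff] at hX
    obtain ⟨⟨hXk, hXJ⟩, hnX⟩ := hX
    obtain ⟨y, hy1, hy2, rfl⟩ := mem_ksubsets_n hn hXk hnX
    rw [Finset.mem_image]
    exact ⟨y, Finset.mem_Icc.mpr ⟨hy1, hy2⟩, (erase_insert_pair (by omega)).symm⟩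
  · intro hS
    rw [Finset.mem_image] at hS
    obtain ⟨y, hy, rfl⟩ := hS
    rw [Finset.mem_Icc] at hy
    refine ⟨insert y {n}, ?_, erase_insert_pair (by omega)⟩
    rw [Finset.mem_filter, Finset.mem_sdiff]
    refine ⟨⟨?_, fun hmem => hnm _ hmem (by simp)⟩, by simp⟩
    rw [mem_ksubsets]
    constructor
    · intro z hz
      simp only [Finset.mem_insert, Finset.mem_singleton] at hz
      rw [Finset.mem_Icc]
      omega
    · rw [Finset.card_insert_of_notMem (by simp; omega), Finset.card_singleton]

lemma contr_full_mem {n : ℕ} (hn : 2 ≤ n) {J : Finset (Finset ℕ)}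
    (hctr : contr J n = (Finset.Icc 1 (n - 1)).image (fun i => ({i} : Finset ℕ))) :
    ∀ y, 1 ≤ y → y ≤ n - 1 → (insert y {n} : Finset ℕ) ∈ J := by
  intro y hy1 hy2
  have hS : ({y} : Finset ℕ) ∈ contr J n := by
    rw [hctr, Finset.mem_image]
    exact ⟨y, Finset.mem_Icc.mpr ⟨hy1, hy2⟩, rfl⟩
  rw [contr, Finset.mem_image] at hS
  obtain ⟨X, hX, hXe⟩ := hS
  rw [Finset.mem_filter] at hX
  have hXeq : X = insert n {y} := by
    rw [← Finset.insert_erase hX.2, hXe]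
  have : (insert n ({y} : Finset ℕ)) = insert y {n} := by
    rw [show (insert n ({y} : Finset ℕ)) = ({n, y} : Finset ℕ) from rfl,
      Finset.pair_comm]
  rw [← this, ← hXeq]
  exact hX.1

lemma contr_compl_of_full {n : ℕ} (hn : 2 ≤ n) {J : Finset (Finset ℕ)}
    (hfull : ∀ y, 1 ≤ y → y ≤ n - 1 → (insert y {n} : Finset ℕ) ∈ J) :
    contr (ksubsets n 2 \ J) n = ∅ := by
  rw [contr_eq_empty_iff]
  intro X hX hnX
  rw [Finset.mem_sdiff] at hX
  obtain ⟨y, hy1, hy2, rfl⟩ := mem_ksubsets_n hn hX.1 hnX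
  exact hX.2 (hfull y hy1 hy2)

end CoconsistentComplement
/-- For `n ≥ 2`, there are exactly `2^(n-2)` coconsistent subsets `J` of
the `2`-element subsets of `[n]` with `J / n = ∅`, and exactly `2^(n-2)` with
`J / n = {{1}, …, {n-1}}`. -/
theorem coconsistent_contraction_empty_full_count (n : ℕ) (hn : 2 ≤ n) :
    Nat.card {J : Finset (Finset ℕ) // CoConsistent n 2 J ∧ contr J n = ∅} = 2 ^ (n - 2) ∧
    Nat.card {J : Finset (Finset ℕ) // CoConsistent n 2 J ∧
        contr J n = (Finset.Icc 1 (n - 1)).image (fun i => ({i} : Finset ℕ))} = 2 ^ (n - 2) := by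
  have h1 : Nat.card {J : Finset (Finset ℕ) // CoConsistent n 2 J ∧ contr J n = ∅}
      = 2 ^ (n - 2) := by
    have e1 : {J : Finset (Finset ℕ) // CoConsistent n 2 J ∧ contr J n = ∅}
        ≃ {J : Finset (Finset ℕ) // J ∈ SGF 1 (n-1)} :=
      Equiv.subtypeEquivRight (fun J => coco_iff hn)
    rw [Nat.card_congr e1, Nat.card_eq_finsetCard]
    have he : n - 1 = 1 + (n - 2) := by omega
    rw [he, card_SGF]
  refine ⟨h1, ?_⟩
  have e2 : {J : Finset (Finset ℕ) // CoConsistent n 2 J ∧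
      contr J n = (Finset.Icc 1 (n - 1)).image (fun i => ({i} : Finset ℕ))}
      ≃ {J : Finset (Finset ℕ) // CoConsistent n 2 J ∧ contr J n = ∅} := by
    refine ⟨fun J => ⟨ksubsets n 2 \ J.1, coco_compl J.2.1,
        contr_compl_of_full hn (contr_full_mem hn J.2.2)⟩,
      fun J => ⟨ksubsets n 2 \ J.1, coco_compl J.2.1,
        contr_compl_of_empty hn (contr_eq_empty_iff.mp J.2.2)⟩, ?_, ?_⟩
    · rintro ⟨J, hJ⟩
      apply Subtype.ext
      exact Finset.sdiff_sdiff_eq_self hJ.1.1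
    · rintro ⟨J, hJ⟩
      apply Subtype.ext
      exact Finset.sdiff_sdiff_eq_self hJ.1.1
  rw [Nat.card_congr e2, h1]
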